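/- Let μ be a Borel probability measure on ℝⁿ with compact support, let 1 ≤ m ≤ n be an integer, let V be an m-dimensional linear subspace of ℝⁿ with orthogonal projection π_V : ℝⁿ → ℝⁿ onto V, and let μ_V = μ ∘ π_V^(−1) be the pushforward of μ under π_V. Then for every θ ∈ (0,1], every t ∈ [0,m], every x ∈ ℝⁿ and every r > 0 one has F_{t,m,θ}^μ(x,r) ≤ F_{t,m,θ}^{μ_V}(π_V(x), r); consequently dim_{P,θ}^m μ_V ≤ dim_{P,θ}^m μ ≤ dim_{P,θ}^n μ. -/

import Mathlib

open MeasureTheory Metric Filter Set Topology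
open scoped ENNReal

noncomputable section
open scoped Classical

/-- The support of a Borel measure `μ`: the set of points all of whose
neighborhoods have positive measure. -/
def msupp {n : ℕ} (μ : Measure (EuclideanSpace ℝ (Fin n))) :
    Set (EuclideanSpace ℝ (Fin n)) :=
  {x | ∀ r : ℝ, 0 < r → 0 < μ (Metric.ball x r)}

/-- The Assouad dimension of a set `E ⊆ ℝⁿ`: the infimum of all `s ≥ 0` for which
there is `C > 0` such that for all `0 < r < R` and `x ∈ E`, the set `E ∩ B(x,R)`
can be covered by at most `C (R/r)^s` balls of radius `r`. -/
def dimA {n : ℕ} (E : Set (EuclideanSpace ℝ (Fin n))) : ℝ :=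
  sInf {s : ℝ | 0 ≤ s ∧ ∃ C : ℝ, 0 < C ∧ ∀ x ∈ E, ∀ r R : ℝ, 0 < r → r < R →
    ∃ F : Finset (EuclideanSpace ℝ (Fin n)), (F.card : ℝ) ≤ C * (R / r) ^ s ∧
      E ∩ Metric.closedBall x R ⊆ ⋃ y ∈ F, Metric.closedBall y r}

/-- The packing dimension of a measure:
`dim_P μ = sup {t ≥ 0 : liminf_{r→0} μ(B(x,r))/r^t = 0 for μ-a.e. x}`. -/
def dimP {n : ℕ} (μ : Measure (EuclideanSpace ℝ (Fin n))) : ℝ :=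
  sSup {t : ℝ | 0 ≤ t ∧ ∀ᵐ x ∂μ,
    Filter.liminf (fun r : ℝ =>
      μ (Metric.closedBall x r) / ENNReal.ofReal (r ^ t)) (𝓝[>] 0) = 0}

/-- The potential `F_m^μ(x,r) = ∫ min{1, r^m |x-y|^{-m}} dμ(y)`, with the convention
that the integrand equals `1` when `y = x`. -/
def Fpot {n : ℕ} (m : ℝ) (μ : Measure (EuclideanSpace ℝ (Fin n)))
    (x : EuclideanSpace ℝ (Fin n)) (r : ℝ) : ℝ≥0∞ :=
  ∫⁻ y, ENNReal.ofReal (if y = x then 1 else min 1 (r ^ m * ‖x - y‖ ^ (-m))) ∂μ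

/-- The `m`-dimensional packing dimension profile
`dim_P^m μ = sup {t ≥ 0 : liminf_{r→0} r^{-t} F_m^μ(x,r) = 0 for μ-a.e. x}`. -/
def dimPprofile {n : ℕ} (m : ℝ) (μ : Measure (EuclideanSpace ℝ (Fin n))) : ℝ :=
  sSup {t : ℝ | 0 ≤ t ∧ ∀ᵐ x ∂μ,
    Filter.liminf (fun r : ℝ => Fpot m μ x r / ENNReal.ofReal (r ^ t)) (𝓝[>] 0) = 0}

/-- The potential
`F_{t,s,θ}^μ(x,r) = ∫ min{1, r^t |x-y|^{-t}, r^{θ(s-t)+t} |x-y|^{-s}} dμ(y)`,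
with the convention that the integrand equals `1` when `y = x`. -/
def Ftheta {n : ℕ} (t s θ : ℝ) (μ : Measure (EuclideanSpace ℝ (Fin n)))
    (x : EuclideanSpace ℝ (Fin n)) (r : ℝ) : ℝ≥0∞ :=
  ∫⁻ y, ENNReal.ofReal (if y = x then 1 else
    min (min 1 (r ^ t * ‖x - y‖ ^ (-t))) (r ^ (θ * (s - t) + t) * ‖x - y‖ ^ (-s))) ∂μ

/-- The `θ`-profile
`dim_{P,θ}^s μ = sup {t ∈ [0,s] : liminf_{r→0} r^{-t} F_{t,s,θ}^μ(x,r) = 0 for μ-a.e. x}`. -/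
def dimPtheta {n : ℕ} (s θ : ℝ) (μ : Measure (EuclideanSpace ℝ (Fin n))) : ℝ :=
  sSup {t : ℝ | t ∈ Set.Icc 0 s ∧ ∀ᵐ x ∂μ,
    Filter.liminf (fun r : ℝ => Ftheta t s θ μ x r / ENNReal.ofReal (r ^ t)) (𝓝[>] 0) = 0}

/-- The critical point `D(μ) = inf_{θ ∈ (0,1)} dim_{P,θ}^n μ` of a measure on `ℝⁿ`. -/
def Dcrit (n : ℕ) (μ : Measure (EuclideanSpace ℝ (Fin n))) : ℝ :=
  sInf ((fun θ : ℝ => dimPtheta (n : ℝ) θ μ) '' Set.Ioo 0 1)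

private lemma kernel_mono_base {a b t s rt c : ℝ} (hb : 0 < b) (hba : b ≤ a)
    (ht : 0 ≤ t) (hs : 0 ≤ s) (hrt : 0 ≤ rt) (hc : 0 ≤ c) :
    min (min 1 (rt * a ^ (-t))) (c * a ^ (-s)) ≤ min (min 1 (rt * b ^ (-t))) (c * b ^ (-s)) := by
  have h1 : a ^ (-t) ≤ b ^ (-t) := Real.rpow_le_rpow_of_nonpos hb hba (neg_nonpos.mpr ht)
  have h2 : a ^ (-s) ≤ b ^ (-s) := Real.rpow_le_rpow_of_nonpos hb hba (neg_nonpos.mpr hs)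
  exact min_le_min (min_le_min le_rfl (mul_le_mul_of_nonneg_left h1 hrt))
    (mul_le_mul_of_nonneg_left h2 hc)

private lemma kernel_mono_dim {u r t m nn θ : ℝ} (hu : 0 < u) (hr : 0 < r)
    (ht : 0 ≤ t) (htm : t ≤ m) (hmn : m ≤ nn) (hθ : 0 < θ) :
    min (min 1 (r ^ t * u ^ (-t))) (r ^ (θ * (nn - t) + t) * u ^ (-nn)) ≤
      min (min 1 (r ^ t * u ^ (-t))) (r ^ (θ * (m - t) + t) * u ^ (-m)) := by
  rcases le_or_gt u (r ^ θ) with h | h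
  · refine (min_le_left _ _).trans (le_min le_rfl ?_)
    have h1 : (r ^ θ) ^ (-(m - t)) ≤ u ^ (-(m - t)) :=
      Real.rpow_le_rpow_of_nonpos hu h (neg_nonpos.mpr (by linarith))
    have key : (1 : ℝ) ≤ r ^ (θ * (m - t)) * u ^ (-(m - t)) := by
      have e1 : r ^ (θ * (m - t)) * (r ^ θ) ^ (-(m - t)) = 1 := by
        rw [← Real.rpow_mul hr.le, ← Real.rpow_add hr,
          show θ * (m - t) + θ * -(m - t) = 0 by ring, Real.rpow_zero]
      calc (1 : ℝ) = r ^ (θ * (m - t)) * (r ^ θ) ^ (-(m - t)) := e1.symm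
        _ ≤ r ^ (θ * (m - t)) * u ^ (-(m - t)) :=
            mul_le_mul_of_nonneg_left h1 (Real.rpow_nonneg hr.le _)
    have eBm : r ^ (θ * (m - t) + t) * u ^ (-m) =
        (r ^ (θ * (m - t)) * u ^ (-(m - t))) * (r ^ t * u ^ (-t)) := by
      rw [Real.rpow_add hr, show (-m : ℝ) = -(m - t) + -t by ring, Real.rpow_add hu]; ring
    calc min 1 (r ^ t * u ^ (-t)) ≤ r ^ t * u ^ (-t) := min_le_right _ _
      _ = 1 * (r ^ t * u ^ (-t)) := (one_mul _).symm
      _ ≤ (r ^ (θ * (m - t)) * u ^ (-(m - t))) * (r ^ t * u ^ (-t)) :=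
          mul_le_mul_of_nonneg_right key (by positivity)
      _ = r ^ (θ * (m - t) + t) * u ^ (-m) := eBm.symm
  · refine min_le_min le_rfl ?_
    have h3 : (r ^ θ) ^ (nn - m) ≤ u ^ (nn - m) :=
      Real.rpow_le_rpow (Real.rpow_nonneg hr.le θ) h.le (by linarith)
    have key2 : r ^ (θ * (nn - m)) * u ^ (-(nn - m)) ≤ 1 := by
      have e2 : r ^ (θ * (nn - m)) = (r ^ θ) ^ (nn - m) := by
        rw [← Real.rpow_mul hr.le]
      have e3 : u ^ (nn - m) * u ^ (-(nn - m)) = 1 := by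
        rw [← Real.rpow_add hu, show (nn - m) + -(nn - m) = 0 by ring, Real.rpow_zero]
      calc r ^ (θ * (nn - m)) * u ^ (-(nn - m)) ≤ u ^ (nn - m) * u ^ (-(nn - m)) := by
            rw [e2]; exact mul_le_mul_of_nonneg_right h3 (Real.rpow_nonneg hu.le _)
        _ = 1 := e3
    have eBn : r ^ (θ * (nn - t) + t) * u ^ (-nn) =
        (r ^ (θ * (nn - m)) * u ^ (-(nn - m))) * (r ^ (θ * (m - t) + t) * u ^ (-m)) := by
      rw [show θ * (nn - t) + t = θ * (nn - m) + (θ * (m - t) + t) by ring, Real.rpow_add hr,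
        show (-nn : ℝ) = -(nn - m) + -m by ring, Real.rpow_add hu]; ring
    calc r ^ (θ * (nn - t) + t) * u ^ (-nn)
        = (r ^ (θ * (nn - m)) * u ^ (-(nn - m))) * (r ^ (θ * (m - t) + t) * u ^ (-m)) := eBn
      _ ≤ 1 * (r ^ (θ * (m - t) + t) * u ^ (-m)) :=
          mul_le_mul_of_nonneg_right key2 (by positivity)
      _ = r ^ (θ * (m - t) + t) * u ^ (-m) := one_mul _

private lemma kernel_meas {n : ℕ} (c : EuclideanSpace ℝ (Fin n)) (t s rr θ : ℝ) :
    Measurable fun z : EuclideanSpace ℝ (Fin n) => ENNReal.ofReal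
      (if z = c then 1 else
        min (min 1 (rr ^ t * ‖c - z‖ ^ (-t))) (rr ^ (θ * (s - t) + t) * ‖c - z‖ ^ (-s))) := by
  apply Measurable.ennreal_ofReal
  have hn : Measurable fun z : EuclideanSpace ℝ (Fin n) => ‖c - z‖ :=
    (continuous_const.sub continuous_id).norm.measurable
  exact Measurable.ite measurableSet_eq measurable_const
    ((measurable_const.min ((hn.pow_const _).const_mul _)).min ((hn.pow_const _).const_mul _))

private lemma proj_norm_le {n : ℕ} (K : Submodule ℝ (EuclideanSpace ℝ (Fin n)))
    (a b : EuclideanSpace ℝ (Fin n)) :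
    ‖(K.orthogonalProjection a : EuclideanSpace ℝ (Fin n)) -
      (K.orthogonalProjection b : EuclideanSpace ℝ (Fin n))‖ ≤ ‖a - b‖ := by
  have h : (K.orthogonalProjection a : EuclideanSpace ℝ (Fin n)) -
      (K.orthogonalProjection b : EuclideanSpace ℝ (Fin n)) =
      (K.orthogonalProjection (a - b) : EuclideanSpace ℝ (Fin n)) := by
    rw [map_sub]; rfl
  rw [h]
  have h2 : ‖(K.orthogonalProjection (a - b) : EuclideanSpace ℝ (Fin n))‖ =
      ‖K.orthogonalProjection (a - b)‖ := rfl
  rw [h2]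
  calc ‖K.orthogonalProjection (a - b)‖ ≤ 1 * ‖a - b‖ :=
        (K.orthogonalProjection).le_of_opNorm_le_of_le K.orthogonalProjectionOnto_norm_le le_rfl
    _ = ‖a - b‖ := one_mul _

private lemma liminf_zero_of_le' {f g : ℝ → ℝ≥0∞} (h : ∀ᶠ r in 𝓝[>] (0 : ℝ), f r ≤ g r)
    (hg : Filter.liminf g (𝓝[>] 0) = 0) : Filter.liminf f (𝓝[>] 0) = 0 :=
  le_antisymm (hg ▸ Filter.liminf_le_liminf h) zero_le

private lemma sSup_le_sSup_aux {A B : Set ℝ} (hAB : A ⊆ B) (hBnn : ∀ x ∈ B, 0 ≤ x)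
    (hBdd : BddAbove B) : sSup A ≤ sSup B := by
  rcases A.eq_empty_or_nonempty with h | h
  · rw [h, Real.sSup_empty]; exact Real.sSup_nonneg hBnn
  · exact csSup_le_csSup hBdd h hAB

/-- Let `μ` be a Borel probability measure with compact support on `ℝⁿ`,
`1 ≤ m ≤ n`, `V` an `m`-dimensional subspace with orthogonal projection `π_V`, and
`μ_V = μ ∘ π_V⁻¹`. Then `F_{t,m,θ}^μ(x,r) ≤ F_{t,m,θ}^{μ_V}(π_V x, r)` for all
`θ ∈ (0,1]`, `t ∈ [0,m]`, `x` and `r > 0`; consequently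
`dim_{P,θ}^m μ_V ≤ dim_{P,θ}^m μ ≤ dim_{P,θ}^n μ`. -/
theorem statement10 (n : ℕ) (μ : Measure (EuclideanSpace ℝ (Fin n))) [IsProbabilityMeasure μ]
    (hE : IsCompact (msupp μ)) (m : ℕ) (hm : 1 ≤ m) (hmn : m ≤ n)
    (K : Submodule ℝ (EuclideanSpace ℝ (Fin n))) (hK : Module.finrank ℝ K = m)
    (π : EuclideanSpace ℝ (Fin n) → EuclideanSpace ℝ (Fin n))
    (hπ : π = fun x => (K.orthogonalProjection x : EuclideanSpace ℝ (Fin n)))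
    (μV : Measure (EuclideanSpace ℝ (Fin n))) (hμV : μV = μ.map π) :
    (∀ θ ∈ Set.Ioc (0 : ℝ) 1, ∀ t ∈ Set.Icc (0 : ℝ) (m : ℝ),
      ∀ x : EuclideanSpace ℝ (Fin n), ∀ r : ℝ, 0 < r →
        Ftheta t (m : ℝ) θ μ x r ≤ Ftheta t (m : ℝ) θ μV (π x) r) ∧
    (∀ θ ∈ Set.Ioc (0 : ℝ) 1,
      dimPtheta (m : ℝ) θ μV ≤ dimPtheta (m : ℝ) θ μ ∧
      dimPtheta (m : ℝ) θ μ ≤ dimPtheta (n : ℝ) θ μ) := by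
  subst hμV
  have hπc : Continuous π := by
    rw [hπ]; exact continuous_subtype_val.comp (K.orthogonalProjection).continuous
  have hπm : Measurable π := hπc.measurable
  have hnorm : ∀ a b, ‖π a - π b‖ ≤ ‖a - b‖ := by
    intro a b; rw [hπ]; exact proj_norm_le K a b
  have hmR : (0 : ℝ) ≤ (m : ℝ) := Nat.cast_nonneg m
  have part1 : ∀ θ ∈ Set.Ioc (0 : ℝ) 1, ∀ t ∈ Set.Icc (0 : ℝ) (m : ℝ),
      ∀ x : EuclideanSpace ℝ (Fin n), ∀ r : ℝ, 0 < r →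
        Ftheta t (m : ℝ) θ μ x r ≤ Ftheta t (m : ℝ) θ (μ.map π) (π x) r := by
    intro θ hθ t ht x r hr
    simp only [Ftheta]
    rw [lintegral_map (kernel_meas (π x) t (m : ℝ) r θ) hπm]
    refine lintegral_mono fun y => ?_
    apply ENNReal.ofReal_le_ofReal
    by_cases hyx : y = x
    · simp [hyx]
    · rw [if_neg hyx]
      by_cases hπyx : π y = π x
      · rw [if_pos hπyx]
        exact (min_le_left _ _).trans (min_le_left _ _)
      · rw [if_neg hπyx]
        have hb : 0 < ‖π x - π y‖ := by
          rw [norm_pos_iff, sub_ne_zero]; exact fun hc => hπyx hc.symm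
        exact kernel_mono_base hb (hnorm x y) ht.1 hmR
          (Real.rpow_nonneg hr.le t) (Real.rpow_nonneg hr.le _)
  refine ⟨part1, ?_⟩
  intro θ hθ
  constructor
  · unfold dimPtheta
    apply sSup_le_sSup_aux
    · rintro t ⟨ht1, ht2⟩
      refine ⟨ht1, ?_⟩
      have h2 : ∀ᵐ x ∂μ, Filter.liminf
          (fun r : ℝ => Ftheta t (m : ℝ) θ (μ.map π) (π x) r / ENNReal.ofReal (r ^ t))
          (𝓝[>] 0) = 0 := ae_of_ae_map hπm.aemeasurable ht2
      filter_upwards [h2] with x hx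
      refine liminf_zero_of_le' ?_ hx
      filter_upwards [self_mem_nhdsWithin] with r hr
      exact ENNReal.div_le_div_right (part1 θ hθ t ht1 x r hr) _
    · exact fun x hx => hx.1.1
    · exact ⟨(m : ℝ), fun x hx => hx.1.2⟩
  · unfold dimPtheta
    apply sSup_le_sSup_aux
    · rintro t ⟨⟨ht0, htm⟩, ht2⟩
      refine ⟨⟨ht0, htm.trans (Nat.cast_le.mpr hmn)⟩, ?_⟩
      filter_upwards [ht2] with x hx
      refine liminf_zero_of_le' ?_ hx
      filter_upwards [self_mem_nhdsWithin] with r hr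
      refine ENNReal.div_le_div_right (lintegral_mono fun y => ?_) _
      apply ENNReal.ofReal_le_ofReal
      by_cases hyx : y = x
      · simp [hyx]
      · rw [if_neg hyx, if_neg hyx]
        have hu : 0 < ‖x - y‖ := by
          rw [norm_pos_iff, sub_ne_zero]; exact fun hc => hyx hc.symm
        exact kernel_mono_dim hu hr ht0 htm (Nat.cast_le.mpr hmn) hθ.1
    · exact fun x hx => hx.1.1
    · exact ⟨(n : ℝ), fun x hx => hx.1.2⟩
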